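/- Fix 0 < ε ≤ 1 and let 𝕃_ε(n+1) be the set of real symmetric (n+1)×(n+1) matrices with exactly one negative eigenvalue, |det G| > ε, and operator norm |G| < ε⁻¹. For each G ∈ 𝕃_ε(n+1) there exists a map F: 𝕃_ε(n+1) → ℝ^{(n+1)×(n+1)} such that for every G̃ ∈ 𝕃_ε(n+1): G̃ = F(G̃)ᵀ η F(G̃), |F(G̃)| = |G̃|^{1/2}, and |F(G̃) − F(G)| ≤ C(ε,n) |G̃ − G| for a constant C(ε,n) independent of G. -/

import Mathlib

open Matrix

/-- The Minkowski matrix `η = diag(-1, 1, ..., 1)` of size `(n+1) × (n+1)`. -/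
noncomputable def minkowskiEta (n : ℕ) : Matrix (Fin (n + 1)) (Fin (n + 1)) ℝ :=
  Matrix.diagonal (fun i => if i = 0 then (-1 : ℝ) else 1)

/-- The operator norm of a real matrix, acting on Euclidean space. -/
noncomputable def matOpNorm {m : ℕ} (A : Matrix (Fin m) (Fin m) ℝ) : ℝ :=
  ‖Matrix.toEuclideanCLM (𝕜 := ℝ) A‖

/-- The set `𝕃_ε(n+1)` of Lorentz matrices (symmetric, exactly one negative eigenvalue)
with `|det G| > ε` and operator norm `|G| < ε⁻¹`. -/
def lorentzSet (n : ℕ) (ε : ℝ) : Set (Matrix (Fin (n + 1)) (Fin (n + 1)) ℝ) :=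
  {G | ∃ hG : G.IsHermitian,
    (∃ j, hG.eigenvalues j < 0 ∧ ∀ i, i ≠ j → 0 < hG.eigenvalues i) ∧
    ε < |G.det| ∧ matOpNorm G < ε⁻¹}

open scoped Matrix.Norms.L2Operator


variable {N : ℕ}

namespace LorentzAux

/-- Euclidean norm of a plain vector. -/
noncomputable def en (v : Fin N → ℝ) : ℝ := ‖(WithLp.equiv 2 (Fin N → ℝ)).symm v‖

lemma en_nonneg (v : Fin N → ℝ) : 0 ≤ en v := norm_nonneg _

lemma en_sq (v : Fin N → ℝ) : en v ^ 2 = v ⬝ᵥ v := by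
  have := EuclideanSpace.norm_eq ((WithLp.equiv 2 (Fin N → ℝ)).symm v)
  rw [en, this, dotProduct]
  rw [Real.sq_sqrt (by positivity)]
  congr 1; ext i
  rw [Real.norm_eq_abs, sq_abs, pow_two]
  rfl

lemma en_smul (c : ℝ) (v : Fin N → ℝ) : en (c • v) = |c| * en v := by
  rw [en, en, ← Real.norm_eq_abs, ← norm_smul]
  congr 1

lemma ip_CS (u v : Fin N → ℝ) : u ⬝ᵥ v ≤ en u * en v := by
  have h := real_inner_le_norm ((WithLp.equiv 2 (Fin N → ℝ)).symm u)
    ((WithLp.equiv 2 (Fin N → ℝ)).symm v)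
  rw [PiLp.inner_apply] at h
  simpa [en, dotProduct, WithLp.equiv, RCLike.inner_apply, mul_comm] using h

lemma en_mulVec_le (A : Matrix (Fin N) (Fin N) ℝ) (v : Fin N → ℝ) :
    en (A *ᵥ v) ≤ ‖A‖ * en v := by
  simpa [en] using Matrix.l2_opNorm_mulVec A ((WithLp.equiv 2 (Fin N → ℝ)).symm v)

lemma norm_le_of_en (A : Matrix (Fin N) (Fin N) ℝ) (c : ℝ) (hc : 0 ≤ c)
    (h : ∀ v, en (A *ᵥ v) ≤ c * en v) : ‖A‖ ≤ c := by
  rw [Matrix.l2_opNorm_def]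
  refine ContinuousLinearMap.opNorm_le_bound _ hc fun x => ?_
  have := h ((WithLp.equiv 2 (Fin N → ℝ)) x)
  simpa [en, Matrix.toEuclideanLin_apply] using this

end LorentzAux

namespace LorentzAux

variable {A M : Matrix (Fin N) (Fin N) ℝ}

/-- Functional calculus for a real symmetric matrix via its spectral decomposition. -/
noncomputable def her (hA : A.IsHermitian) (d : Fin N → ℝ) : Matrix (Fin N) (Fin N) ℝ :=
  (hA.eigenvectorUnitary : Matrix (Fin N) (Fin N) ℝ) * Matrix.diagonal d *
    (star (hA.eigenvectorUnitary : Matrix (Fin N) (Fin N) ℝ))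

lemma star_eq_transpose (B : Matrix (Fin N) (Fin N) ℝ) : star B = Bᵀ := by
  rw [Matrix.star_eq_conjTranspose, Matrix.conjTranspose_eq_transpose_of_trivial]

lemma her_mul (hA : A.IsHermitian) (d e : Fin N → ℝ) :
    her hA d * her hA e = her hA (fun i => d i * e i) := by
  unfold her
  have h1 : (star (hA.eigenvectorUnitary : Matrix (Fin N) (Fin N) ℝ)) *
      (hA.eigenvectorUnitary : Matrix (Fin N) (Fin N) ℝ) = 1 :=
    Unitary.coe_star_mul_self hA.eigenvectorUnitary
  calc (hA.eigenvectorUnitary : Matrix (Fin N) (Fin N) ℝ) * Matrix.diagonal d *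
      (star (hA.eigenvectorUnitary : Matrix (Fin N) (Fin N) ℝ)) *
      ((hA.eigenvectorUnitary : Matrix (Fin N) (Fin N) ℝ) * Matrix.diagonal e *
      (star (hA.eigenvectorUnitary : Matrix (Fin N) (Fin N) ℝ)))
      = (hA.eigenvectorUnitary : Matrix (Fin N) (Fin N) ℝ) * Matrix.diagonal d *
        ((star (hA.eigenvectorUnitary : Matrix (Fin N) (Fin N) ℝ)) *
        (hA.eigenvectorUnitary : Matrix (Fin N) (Fin N) ℝ)) * Matrix.diagonal e *
        (star (hA.eigenvectorUnitary : Matrix (Fin N) (Fin N) ℝ)) := by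
        simp only [Matrix.mul_assoc]
    _ = (hA.eigenvectorUnitary : Matrix (Fin N) (Fin N) ℝ) * (Matrix.diagonal d *
        Matrix.diagonal e) * (star (hA.eigenvectorUnitary : Matrix (Fin N) (Fin N) ℝ)) := by
        rw [h1]; simp only [Matrix.mul_one, Matrix.mul_assoc]
    _ = _ := by rw [Matrix.diagonal_mul_diagonal]

lemma her_one (hA : A.IsHermitian) : her hA (fun _ => 1) = 1 := by
  unfold her
  rw [Matrix.diagonal_one, Matrix.mul_one]
  exact Unitary.coe_mul_star_self hA.eigenvectorUnitary

lemma her_self (hA : A.IsHermitian) : her hA hA.eigenvalues = A := by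
  have h := hA.spectral_theorem
  rw [Unitary.conjStarAlgAut_apply] at h
  unfold her
  exact h.symm

lemma her_transpose (hA : A.IsHermitian) (d : Fin N → ℝ) : (her hA d)ᵀ = her hA d := by
  rw [← star_eq_transpose]
  unfold her
  simp only [StarMul.star_mul, star_star]
  rw [Matrix.star_eq_conjTranspose (Matrix.diagonal d), Matrix.diagonal_conjTranspose]
  simp [Matrix.mul_assoc, star_trivial]

lemma her_isHermitian (hA : A.IsHermitian) (d : Fin N → ℝ) : (her hA d).IsHermitian := by
  rw [Matrix.IsHermitian, Matrix.conjTranspose_eq_transpose_of_trivial, her_transpose]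

lemma her_mulVec_basis (hA : A.IsHermitian) (d : Fin N → ℝ) (i : Fin N) :
    her hA d *ᵥ ⇑(hA.eigenvectorBasis i) = d i • ⇑(hA.eigenvectorBasis i) := by
  unfold her
  rw [← Matrix.mulVec_mulVec, ← Matrix.mulVec_mulVec,
    Matrix.IsHermitian.star_eigenvectorUnitary_mulVec,
    Matrix.diagonal_mulVec_single, ← Matrix.IsHermitian.eigenvectorUnitary_mulVec hA i]
  rw [show Pi.single i (d i * 1) = d i • (Pi.single i 1 : Fin N → ℝ) by
    ext j; by_cases h : j = i <;> simp [h, Pi.single_apply]]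
  rw [Matrix.mulVec_smul]

end LorentzAux

namespace LorentzAux

variable {A M B : Matrix (Fin N) (Fin N) ℝ}

lemma dot_mulVec_left (A : Matrix (Fin N) (Fin N) ℝ) (u v : Fin N → ℝ) :
    (A *ᵥ u) ⬝ᵥ v = u ⬝ᵥ (Aᵀ *ᵥ v) := by
  rw [Matrix.dotProduct_mulVec, Matrix.vecMul_transpose]

lemma en_orth (hB : Bᵀ * B = 1) (v : Fin N → ℝ) : en (B *ᵥ v) = en v := by
  have h : en (B *ᵥ v) ^ 2 = en v ^ 2 := by
    rw [en_sq, en_sq, Matrix.dotProduct_mulVec, ← Matrix.mulVec_transpose,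
      Matrix.mulVec_mulVec, hB, Matrix.one_mulVec]
  have h1 := en_nonneg (B *ᵥ v); have h2 := en_nonneg v
  nlinarith

lemma norm_one_mat [NeZero N] : ‖(1 : Matrix (Fin N) (Fin N) ℝ)‖ = 1 := by
  have hle : ‖(1 : Matrix (Fin N) (Fin N) ℝ)‖ ≤ 1 := by
    refine norm_le_of_en _ _ zero_le_one fun v => by rw [Matrix.one_mulVec, one_mul]
  have hge : (1:ℝ) ≤ ‖(1 : Matrix (Fin N) (Fin N) ℝ)‖ := by
    have hv : en (Pi.single (0 : Fin N) (1:ℝ)) = 1 := by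
      have h := en_sq (Pi.single (0 : Fin N) (1:ℝ))
      have : (Pi.single (0 : Fin N) (1:ℝ)) ⬝ᵥ (Pi.single (0 : Fin N) (1:ℝ)) = 1 := by
        simp [dotProduct, Pi.single_apply]
      rw [this] at h
      have := en_nonneg (Pi.single (0 : Fin N) (1:ℝ))
      nlinarith
    have := en_mulVec_le (1 : Matrix (Fin N) (Fin N) ℝ) (Pi.single (0 : Fin N) (1:ℝ))
    rw [Matrix.one_mulVec, hv, mul_one] at this
    linarith
  linarith

lemma norm_orth [NeZero N] (hB : Bᵀ * B = 1) : ‖B‖ = 1 := by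
  have hle : ‖B‖ ≤ 1 := norm_le_of_en _ _ zero_le_one fun v => by rw [en_orth hB, one_mul]
  have hv : en (Pi.single (0 : Fin N) (1:ℝ)) = 1 := by
    have h := en_sq (Pi.single (0 : Fin N) (1:ℝ))
    have h2 : (Pi.single (0 : Fin N) (1:ℝ)) ⬝ᵥ (Pi.single (0 : Fin N) (1:ℝ)) = 1 := by
      simp [dotProduct, Pi.single_apply]
    rw [h2] at h
    have := en_nonneg (Pi.single (0 : Fin N) (1:ℝ)); nlinarith
  have := en_mulVec_le B (Pi.single (0 : Fin N) (1:ℝ))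
  rw [en_orth hB, hv, mul_one] at this
  linarith

lemma norm_transpose (A : Matrix (Fin N) (Fin N) ℝ) : ‖Aᵀ‖ = ‖A‖ := by
  rw [← Matrix.conjTranspose_eq_transpose_of_trivial, Matrix.l2_opNorm_conjTranspose]

lemma norm_mul_orth_left [NeZero N] (hB : Bᵀ * B = 1) (hB2 : B * Bᵀ = 1)
    (A : Matrix (Fin N) (Fin N) ℝ) : ‖B * A‖ = ‖A‖ := by
  have h1 : ‖B * A‖ ≤ ‖A‖ := by
    have := Matrix.l2_opNorm_mul B A
    rw [norm_orth hB] at this; linarith [this]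
  have h2 : ‖A‖ ≤ ‖B * A‖ := by
    have hA : A = Bᵀ * (B * A) := by rw [← Matrix.mul_assoc, hB, Matrix.one_mul]
    have hBt : ‖Bᵀ‖ = 1 := by
      refine norm_orth ?_
      rw [Matrix.transpose_transpose, hB2]
    calc ‖A‖ = ‖Bᵀ * (B * A)‖ := by rw [← hA]
      _ ≤ ‖Bᵀ‖ * ‖B * A‖ := Matrix.l2_opNorm_mul _ _
      _ = ‖B * A‖ := by rw [hBt, one_mul]
  linarith

lemma norm_mul_orth_right [NeZero N] (hB : Bᵀ * B = 1) (hB2 : B * Bᵀ = 1)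
    (A : Matrix (Fin N) (Fin N) ℝ) : ‖A * B‖ = ‖A‖ := by
  rw [← norm_transpose (A * B), Matrix.transpose_mul, norm_mul_orth_left
    (by rw [Matrix.transpose_transpose, hB2]) (by rw [Matrix.transpose_transpose, hB]),
    norm_transpose]

end LorentzAux

namespace LorentzAux

variable {A M B : Matrix (Fin N) (Fin N) ℝ}

lemma unitary_t_mul (hA : A.IsHermitian) :
    ((hA.eigenvectorUnitary : Matrix (Fin N) (Fin N) ℝ))ᵀ *
    (hA.eigenvectorUnitary : Matrix (Fin N) (Fin N) ℝ) = 1 := by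
  rw [← star_eq_transpose]
  exact Unitary.coe_star_mul_self hA.eigenvectorUnitary

lemma unitary_mul_t (hA : A.IsHermitian) :
    (hA.eigenvectorUnitary : Matrix (Fin N) (Fin N) ℝ) *
    ((hA.eigenvectorUnitary : Matrix (Fin N) (Fin N) ℝ))ᵀ = 1 := by
  rw [← star_eq_transpose]
  exact Unitary.coe_mul_star_self hA.eigenvectorUnitary

lemma her_quad (hA : A.IsHermitian) (d : Fin N → ℝ) (x : Fin N → ℝ) :
    x ⬝ᵥ (her hA d *ᵥ x) =
      ∑ i, d i * (((hA.eigenvectorUnitary : Matrix (Fin N) (Fin N) ℝ))ᵀ *ᵥ x) i ^ 2 := by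
  set U := (hA.eigenvectorUnitary : Matrix (Fin N) (Fin N) ℝ) with hU
  set w := Uᵀ *ᵥ x with hw
  have : her hA d *ᵥ x = U *ᵥ (Matrix.diagonal d *ᵥ w) := by
    rw [her, star_eq_transpose, ← hU, Matrix.mul_assoc]
    simp only [Matrix.mulVec_mulVec, hw]
  rw [this, dotProduct_comm, dot_mulVec_left, ← hw]
  rw [dotProduct_comm]
  simp [dotProduct, Matrix.mulVec_diagonal, pow_two]
  congr 1; ext i; ring

lemma her_quad_base (hA : A.IsHermitian) (x : Fin N → ℝ) :
    x ⬝ᵥ x = ∑ i, (((hA.eigenvectorUnitary : Matrix (Fin N) (Fin N) ℝ))ᵀ *ᵥ x) i ^ 2 := by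
  have h := her_quad hA (fun _ => 1) x
  rw [her_one] at h
  rw [Matrix.one_mulVec] at h
  simpa using h

lemma her_quad_ge (hA : A.IsHermitian) {d : Fin N → ℝ} {c : ℝ} (hd : ∀ i, c ≤ d i)
    (x : Fin N → ℝ) : c * (x ⬝ᵥ x) ≤ x ⬝ᵥ (her hA d *ᵥ x) := by
  rw [her_quad, her_quad_base hA x, Finset.mul_sum]
  exact Finset.sum_le_sum fun i _ => by
    have := sq_nonneg ((((hA.eigenvectorUnitary : Matrix (Fin N) (Fin N) ℝ))ᵀ *ᵥ x) i)
    nlinarith [hd i]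

lemma her_psd (hA : A.IsHermitian) {d : Fin N → ℝ} (hd : ∀ i, 0 ≤ d i) :
    (her hA d).PosSemidef := by
  refine Matrix.posSemidef_iff_dotProduct_mulVec.2 ⟨her_isHermitian hA d, fun x => ?_⟩
  have := her_quad_ge hA hd x
  rw [zero_mul] at this
  simpa [dotProduct, star_trivial] using this

lemma her_norm_le [NeZero N] (hA : A.IsHermitian) {d : Fin N → ℝ} {c : ℝ} (hc : 0 ≤ c)
    (hd : ∀ i, |d i| ≤ c) : ‖her hA d‖ ≤ c := by
  set U := (hA.eigenvectorUnitary : Matrix (Fin N) (Fin N) ℝ) with hU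
  refine norm_le_of_en _ _ hc fun v => ?_
  have hexp : her hA d *ᵥ v = U *ᵥ (Matrix.diagonal d *ᵥ (Uᵀ *ᵥ v)) := by
    rw [her, star_eq_transpose, ← hU, Matrix.mul_assoc]
    simp only [Matrix.mulVec_mulVec]
  rw [hexp, en_orth (unitary_t_mul hA)]
  have h1 : en (Matrix.diagonal d *ᵥ (Uᵀ *ᵥ v)) ≤ c * en (Uᵀ *ᵥ v) := by
    set w := Uᵀ *ᵥ v
    have hsq : en (Matrix.diagonal d *ᵥ w) ^ 2 ≤ (c * en w) ^ 2 := by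
      rw [en_sq, mul_pow, en_sq]
      have : (Matrix.diagonal d *ᵥ w) ⬝ᵥ (Matrix.diagonal d *ᵥ w) = ∑ i, d i ^2 * w i ^2 := by
        simp [dotProduct, Matrix.mulVec_diagonal]
        congr 1; ext i; ring
      rw [this, dotProduct, Finset.mul_sum]
      refine Finset.sum_le_sum fun i _ => ?_
      have h2 : d i ^ 2 ≤ c ^ 2 := by
        have := hd i; nlinarith [abs_nonneg (d i), le_abs_self (d i), neg_abs_le (d i)]
      nlinarith [sq_nonneg (w i)]
    have e1 := en_nonneg (Matrix.diagonal d *ᵥ w)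
    have e2 := en_nonneg w
    nlinarith [mul_nonneg hc e2]
  have horth : en (Uᵀ *ᵥ v) = en v := by
    refine en_orth ?_ v
    rw [Matrix.transpose_transpose, unitary_mul_t hA]
  rw [horth] at h1; exact h1

lemma abs_eig_le_norm [NeZero N] (hA : A.IsHermitian) (d : Fin N → ℝ) (i : Fin N) :
    |d i| ≤ ‖her hA d‖ := by
  have hb : en ⇑(hA.eigenvectorBasis i) = 1 := by
    rw [en]
    exact hA.eigenvectorBasis.orthonormal.1 i
  have h := en_mulVec_le (her hA d) ⇑(hA.eigenvectorBasis i)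
  rw [her_mulVec_basis, en_smul, hb, mul_one, mul_one] at h
  exact h

end LorentzAux

namespace LorentzAux

lemma sylvester [NeZero N] (P Q X R : Matrix (Fin N) (Fin N) ℝ) {a : ℝ} (ha : 0 < a)
    (hP : ∀ x, a * (x ⬝ᵥ x) ≤ x ⬝ᵥ (P *ᵥ x)) (hQ : ∀ x, a * (x ⬝ᵥ x) ≤ x ⬝ᵥ (Q *ᵥ x))
    (h : P * X + X * Q = R) : ‖X‖ ≤ ‖R‖ / (2 * a) := by
  rcases eq_or_lt_of_le (norm_nonneg X) with hX | hX
  · rw [← hX]; positivity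
  set σ := ‖X‖ with hσ
  set S := Xᵀ * X with hSdef
  have hS : S.IsHermitian := by
    rw [Matrix.IsHermitian, Matrix.conjTranspose_eq_transpose_of_trivial, hSdef,
      Matrix.transpose_mul, Matrix.transpose_transpose]
  have hSnorm : ‖S‖ = σ ^ 2 := by
    rw [hSdef, ← Matrix.conjTranspose_eq_transpose_of_trivial,
      Matrix.l2_opNorm_conjTranspose_mul_self, pow_two]
  -- max eigenvalue
  obtain ⟨i₀, -, hi₀⟩ := Finset.exists_max_image (Finset.univ : Finset (Fin N))
    (fun i => |hS.eigenvalues i|) ⟨⟨0, Nat.pos_of_ne_zero (NeZero.ne N)⟩, Finset.mem_univ _⟩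
  have hSval : |hS.eigenvalues i₀| = σ ^ 2 := by
    have h1 : ‖S‖ ≤ |hS.eigenvalues i₀| := by
      conv_lhs => rw [← her_self hS]
      exact her_norm_le hS (abs_nonneg _) (fun i => hi₀ i (Finset.mem_univ i))
    have h2 : |hS.eigenvalues i₀| ≤ ‖S‖ := by
      conv_rhs => rw [← her_self hS]
      exact abs_eig_le_norm hS _ i₀
    linarith [hSnorm ▸ h1, hSnorm ▸ h2]
  set v := ⇑(hS.eigenvectorBasis i₀) with hvdef
  have hv : S *ᵥ v = hS.eigenvalues i₀ • v := by
    conv_lhs => rw [← her_self hS]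
    exact her_mulVec_basis hS _ i₀
  have henv : en v = 1 := by rw [en, hvdef]; exact hS.eigenvectorBasis.orthonormal.1 i₀
  have hvv : v ⬝ᵥ v = 1 := by rw [← en_sq, henv]; norm_num
  have hXvXv : (X *ᵥ v) ⬝ᵥ (X *ᵥ v) = hS.eigenvalues i₀ := by
    rw [dot_mulVec_left, Matrix.mulVec_mulVec, ← hSdef, hv, dotProduct_smul, hvv]
    simp
  have hevnn : 0 ≤ hS.eigenvalues i₀ := by
    rw [← hXvXv, ← en_sq]; positivity
  have hev : hS.eigenvalues i₀ = σ ^ 2 := by rw [← hSval, abs_of_nonneg hevnn]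
  have henXv : en (X *ᵥ v) = σ := by
    have : en (X *ᵥ v) ^ 2 = σ ^ 2 := by rw [en_sq, hXvXv, hev]
    have h1 := en_nonneg (X *ᵥ v)
    nlinarith
  set u := σ⁻¹ • (X *ᵥ v) with hudef
  have henu : en u = 1 := by
    rw [hudef, en_smul, henXv, abs_of_pos (inv_pos.mpr hX), inv_mul_cancel₀ (ne_of_gt hX)]
  have huu : u ⬝ᵥ u = 1 := by rw [← en_sq, henu]; norm_num
  have hXv : X *ᵥ v = σ • u := by
    rw [hudef, smul_smul, mul_inv_cancel₀ (ne_of_gt hX), one_smul]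
  have hXtu : Xᵀ *ᵥ u = σ • v := by
    rw [hudef, Matrix.mulVec_smul, Matrix.mulVec_mulVec, ← hSdef, hv, hev, smul_smul]
    rw [show σ⁻¹ * σ ^ 2 = σ by field_simp]
  have key : 2 * a * σ ≤ u ⬝ᵥ (R *ᵥ v) := by
    have hR : R *ᵥ v = P *ᵥ (X *ᵥ v) + X *ᵥ (Q *ᵥ v) := by
      rw [← h, Matrix.add_mulVec, ← Matrix.mulVec_mulVec, ← Matrix.mulVec_mulVec]
    rw [hR, dotProduct_add]
    have t1 : a * σ ≤ u ⬝ᵥ (P *ᵥ (X *ᵥ v)) := by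
      rw [hXv, Matrix.mulVec_smul, dotProduct_smul, smul_eq_mul]
      have := hP u
      rw [huu, mul_one] at this
      nlinarith
    have t2 : a * σ ≤ u ⬝ᵥ (X *ᵥ (Q *ᵥ v)) := by
      have : u ⬝ᵥ (X *ᵥ (Q *ᵥ v)) = σ * (v ⬝ᵥ (Q *ᵥ v)) := by
        rw [dotProduct_comm, dot_mulVec_left, hXtu, dotProduct_smul, smul_eq_mul,
          dotProduct_comm]
      rw [this]
      have := hQ v
      rw [hvv, mul_one] at this
      nlinarith
    linarith
  have hub : u ⬝ᵥ (R *ᵥ v) ≤ ‖R‖ := by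
    calc u ⬝ᵥ (R *ᵥ v) ≤ en u * en (R *ᵥ v) := ip_CS _ _
      _ ≤ 1 * (‖R‖ * en v) := by
          rw [henu]; exact mul_le_mul_of_nonneg_left (en_mulVec_le R v) zero_le_one
      _ = ‖R‖ := by rw [henv, one_mul, mul_one]
  have hfin : 2 * a * σ ≤ ‖R‖ := le_trans key hub
  have h2a : (0:ℝ) < 2 * a := by linarith
  calc σ = (2 * a * σ) / (2 * a) := by field_simp
    _ ≤ ‖R‖ / (2 * a) := by gcongr

end LorentzAux

namespace LorentzAux

noncomputable def permMat (σ : Equiv.Perm (Fin N)) : Matrix (Fin N) (Fin N) ℝ :=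
  Matrix.of fun i k => if σ i = k then (1:ℝ) else 0

lemma permMat_apply (σ : Equiv.Perm (Fin N)) (i k : Fin N) :
    permMat σ i k = if σ i = k then (1:ℝ) else 0 := rfl

lemma permMat_t_mul (σ : Equiv.Perm (Fin N)) : (permMat σ)ᵀ * permMat σ = 1 := by
  ext i k
  rw [Matrix.mul_apply]
  rw [Finset.sum_eq_single (σ.symm i)
    (fun l _ hl => by
      have : σ l ≠ i := fun hc => hl (by rw [← hc, Equiv.symm_apply_apply])
      simp [permMat_apply, Matrix.transpose_apply, this])
    (fun h => absurd (Finset.mem_univ _) h)]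
  simp only [Matrix.transpose_apply, permMat_apply, Equiv.apply_symm_apply, if_true,
    Matrix.one_apply]
  by_cases h : i = k <;> simp [h]

lemma permMat_mul_t (σ : Equiv.Perm (Fin N)) : permMat σ * (permMat σ)ᵀ = 1 := by
  ext i k
  rw [Matrix.mul_apply]
  rw [Finset.sum_eq_single (σ i)
    (fun l _ hl => by
      have : σ i ≠ l := fun hc => hl hc.symm
      simp [permMat_apply, Matrix.transpose_apply, this])
    (fun h => absurd (Finset.mem_univ _) h)]
  simp only [Matrix.transpose_apply, permMat_apply, if_true, Matrix.one_apply]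
  by_cases h : i = k
  · simp [h]
  · have : σ k ≠ σ i := fun hc => h (σ.injective hc).symm
    simp [h, this]

lemma permMat_conj_diag (σ : Equiv.Perm (Fin N)) (d : Fin N → ℝ) :
    (permMat σ)ᵀ * Matrix.diagonal d * permMat σ =
      Matrix.diagonal (fun i => d (σ.symm i)) := by
  rw [Matrix.mul_assoc]
  ext i k
  rw [Matrix.mul_apply]
  have hdq : ∀ l, (Matrix.diagonal d * permMat σ) l k = d l * (if σ l = k then (1:ℝ) else 0) := by
    intro l
    rw [Matrix.mul_apply]
    rw [Finset.sum_eq_single l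
      (fun m _ hm => by simp [Matrix.diagonal_apply, Ne.symm hm])
      (fun h => absurd (Finset.mem_univ _) h)]
    simp [Matrix.diagonal_apply, permMat_apply]
  rw [Finset.sum_eq_single (σ.symm i)
    (fun l _ hl => by
      have : σ l ≠ i := fun hc => hl (by rw [← hc, Equiv.symm_apply_apply])
      simp [permMat_apply, Matrix.transpose_apply, this])
    (fun h => absurd (Finset.mem_univ _) h)]
  rw [hdq]
  simp only [Matrix.transpose_apply, permMat_apply, Equiv.apply_symm_apply, if_true,
    Matrix.diagonal_apply]
  by_cases h : i = k <;> simp [h]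

end LorentzAux

namespace LorentzAux

lemma en_ge_sub (v w : Fin N → ℝ) : en w - en (w - v) ≤ en v := by
  have h : en w ≤ en v + en (w - v) := by
    rw [en, en, en]
    have : (WithLp.equiv 2 (Fin N → ℝ)).symm w
        = (WithLp.equiv 2 (Fin N → ℝ)).symm v +
          ((WithLp.equiv 2 (Fin N → ℝ)).symm w - (WithLp.equiv 2 (Fin N → ℝ)).symm v) := by
      abel
    rw [this]
    exact (norm_add_le _ _).trans (by rfl)
  linarith

set_option maxHeartbeats 1000000 in
lemma W_pack [NeZero N] (s s' : Matrix (Fin N) (Fin N) ℝ) (hs : sᵀ = s) (hs' : s'ᵀ = s')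
    (hss : s * s = 1) (hss' : s' * s' = 1) (hns : ‖s‖ ≤ 1) (hns' : ‖s'‖ ≤ 1)
    (hclose : ‖s' - s‖ ≤ 1/2) :
    ∃ W : Matrix (Fin N) (Fin N) ℝ, Wᵀ = W ∧ Wᵀ * W = 1 ∧ W * Wᵀ = 1 ∧
      W * s * W = s' ∧ ‖W - s‖ ≤ 3 * ‖s' - s‖ := by
  obtain ⟨M, hMdef⟩ : ∃ M, M = (1/2 : ℝ) • (s + s') := ⟨_, rfl⟩
  have hMt : Mᵀ = M := by
    rw [hMdef, Matrix.transpose_smul, Matrix.transpose_add, hs, hs']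
  have hM : M.IsHermitian := by
    rw [Matrix.IsHermitian, Matrix.conjTranspose_eq_transpose_of_trivial, hMt]
  have hMsub : M - s = (1/2 : ℝ) • (s' - s) := by
    rw [hMdef]; module
  have hMsubn : ‖M - s‖ = ‖s' - s‖ / 2 := by
    rw [hMsub, norm_smul]
    simp [abs_of_pos]; ring
  have hMsn : ‖M - s‖ ≤ 1/4 := by rw [hMsubn]; linarith
  have hMn : ‖M‖ ≤ 5/4 := by
    calc ‖M‖ = ‖s + (M - s)‖ := by congr 1; abel
      _ ≤ ‖s‖ + ‖M - s‖ := norm_add_le _ _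
      _ ≤ 5/4 := by linarith
  have hMs : M * s = s' * M := by
    rw [hMdef, Matrix.smul_mul, Matrix.mul_smul, Matrix.add_mul, Matrix.mul_add, hss, hss']
    module
  have hsM : s * M = M * s' := by
    rw [hMdef, Matrix.smul_mul, Matrix.mul_smul, Matrix.add_mul, Matrix.mul_add, hss, hss']
    module
  have hstss : sᵀ * s = 1 := by rw [hs, hss]
  have hμlow : ∀ i, 3/4 ≤ |hM.eigenvalues i| := by
    intro i
    have henb : en ⇑(hM.eigenvectorBasis i) = 1 := by
      rw [en]; exact hM.eigenvectorBasis.orthonormal.1 i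
    have hMb : M *ᵥ ⇑(hM.eigenvectorBasis i) = hM.eigenvalues i • ⇑(hM.eigenvectorBasis i) :=
      hM.mulVec_eigenvectorBasis i
    have h1 : en (M *ᵥ ⇑(hM.eigenvectorBasis i)) = |hM.eigenvalues i| := by
      rw [hMb, en_smul, henb, mul_one]
    have h2 : en (s *ᵥ ⇑(hM.eigenvectorBasis i)) = 1 := by rw [en_orth hstss, henb]
    have h3 : en (s *ᵥ ⇑(hM.eigenvectorBasis i) - M *ᵥ ⇑(hM.eigenvectorBasis i)) ≤ 1/4 := by
      rw [show s *ᵥ ⇑(hM.eigenvectorBasis i) - M *ᵥ ⇑(hM.eigenvectorBasis i)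
          = (s - M) *ᵥ ⇑(hM.eigenvectorBasis i) by rw [Matrix.sub_mulVec]]
      calc en ((s - M) *ᵥ ⇑(hM.eigenvectorBasis i)) ≤ ‖s - M‖ * en ⇑(hM.eigenvectorBasis i) :=
            en_mulVec_le _ _
        _ ≤ 1/4 := by rw [henb, mul_one, norm_sub_rev]; exact hMsn
    have h4 := en_ge_sub (M *ᵥ ⇑(hM.eigenvectorBasis i)) (s *ᵥ ⇑(hM.eigenvectorBasis i))
    rw [h1, h2] at h4
    linarith
  have hμhigh : ∀ i, |hM.eigenvalues i| ≤ 5/4 := by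
    intro i
    have h := abs_eig_le_norm hM hM.eigenvalues i
    rw [her_self hM] at h
    linarith
  have hμne : ∀ i, hM.eigenvalues i ≠ 0 := fun i h => by
    have := hμlow i; rw [h] at this; simp at this; linarith
  obtain ⟨P, hPdef⟩ : ∃ P, P = her hM (fun i => |hM.eigenvalues i|⁻¹) := ⟨_, rfl⟩
  obtain ⟨Pinv, hPinvdef⟩ : ∃ Q, Q = her hM (fun i => |hM.eigenvalues i|) := ⟨_, rfl⟩
  obtain ⟨W, hWdef⟩ : ∃ W, W = M * P := ⟨_, rfl⟩
  have hM2her : M * M = her hM (fun i => hM.eigenvalues i * hM.eigenvalues i) := by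
    conv_lhs => rw [← her_self hM]
    rw [her_mul]
  have hPt : Pᵀ = P := by rw [hPdef]; exact her_transpose hM _
  have hPinvt : Pinvᵀ = Pinv := by rw [hPinvdef]; exact her_transpose hM _
  have hPPinv : P * Pinv = 1 := by
    rw [hPdef, hPinvdef, her_mul]
    rw [show (fun i => |hM.eigenvalues i|⁻¹ * |hM.eigenvalues i|) = fun _ => (1:ℝ) from funext fun i => by
      rw [inv_mul_cancel₀ (abs_ne_zero.mpr (hμne i))]]
    exact her_one hM
  have hPinvP : Pinv * P = 1 := by
    rw [hPinvdef, hPdef, her_mul]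
    rw [show (fun i => |hM.eigenvalues i| * |hM.eigenvalues i|⁻¹) = fun _ => (1:ℝ) from funext fun i => by
      rw [mul_inv_cancel₀ (abs_ne_zero.mpr (hμne i))]]
    exact her_one hM
  have hMP : M * P = P * M := by
    conv_lhs => rw [← her_self hM, hPdef, her_mul]
    conv_rhs => rw [← her_self hM, hPdef, her_mul]
    rw [show (fun i => hM.eigenvalues i * |hM.eigenvalues i|⁻¹)
        = (fun i => |hM.eigenvalues i|⁻¹ * hM.eigenvalues i) from
      funext fun i => mul_comm _ _]
  have hWher : M * P = her hM (fun i => hM.eigenvalues i * |hM.eigenvalues i|⁻¹) := by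
    conv_lhs => rw [← her_self hM, hPdef, her_mul]
  have hWsq : W * W = 1 := by
    rw [hWdef, hWher, her_mul]
    rw [show (fun i => (hM.eigenvalues i * |hM.eigenvalues i|⁻¹) * (hM.eigenvalues i * |hM.eigenvalues i|⁻¹)) = fun _ => (1:ℝ) from
      funext fun i => by
        rw [mul_mul_mul_comm, ← mul_inv, abs_mul_abs_self,
          mul_inv_cancel₀ (mul_ne_zero (hμne i) (hμne i))]]
    exact her_one hM
  have hWt : Wᵀ = W := by
    rw [hWdef, Matrix.transpose_mul, hPt, hMt, ← hMP]
  -- s conjugation fixes P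
  have hsM2s : s * (M * M) * s = M * M := by
    calc s * (M * M) * s = (s * M) * (M * s) := by noncomm_ring
      _ = (M * s') * (s' * M) := by rw [hsM, hMs]
      _ = M * (s' * s') * M := by noncomm_ring
      _ = M * M := by rw [hss', Matrix.mul_one]
  have hsM2 : s * (M * M) = (M * M) * s := by
    calc s * (M * M) = s * (M * M) * (s * s) := by rw [hss, Matrix.mul_one]
      _ = (s * (M * M) * s) * s := by noncomm_ring
      _ = (M * M) * s := by rw [hsM2s]
  have hP2M2 : (P * P) * (M * M) = 1 := by
    rw [hPdef, hM2her, her_mul, her_mul]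
    rw [show (fun i => (|hM.eigenvalues i|⁻¹ * |hM.eigenvalues i|⁻¹) * (hM.eigenvalues i * hM.eigenvalues i)) = fun _ => (1:ℝ) from
      funext fun i => by
        rw [← mul_inv, abs_mul_abs_self, inv_mul_cancel₀ (mul_ne_zero (hμne i) (hμne i))]]
    exact her_one hM
  have hM2P2 : (M * M) * (P * P) = 1 := by
    rw [hPdef, hM2her, her_mul, her_mul]
    rw [show (fun i => (hM.eigenvalues i * hM.eigenvalues i) * (|hM.eigenvalues i|⁻¹ * |hM.eigenvalues i|⁻¹)) = fun _ => (1:ℝ) from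
      funext fun i => by
        rw [← mul_inv, abs_mul_abs_self, mul_inv_cancel₀ (mul_ne_zero (hμne i) (hμne i))]]
    exact her_one hM
  have hsP2s : s * (P * P) * s = P * P := by
    have h1 : (s * (P * P) * s) * (M * M) = 1 := by
      calc (s * (P * P) * s) * (M * M) = s * (P * P) * (s * (M * M)) := by noncomm_ring
        _ = s * (P * P) * ((M * M) * s) := by rw [hsM2]
        _ = s * ((P * P) * (M * M)) * s := by noncomm_ring
        _ = s * 1 * s := by rw [hP2M2]
        _ = 1 := by rw [Matrix.mul_one, hss]
    calc s * (P * P) * s = (s * (P * P) * s) * ((M * M) * (P * P)) := by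
          rw [hM2P2, Matrix.mul_one]
      _ = ((s * (P * P) * s) * (M * M)) * (P * P) := by noncomm_ring
      _ = 1 * (P * P) := by rw [h1]
      _ = P * P := Matrix.one_mul _
  have hPpsd : P.PosSemidef := by rw [hPdef]; exact her_psd hM fun i => by positivity
  have hsPs_psd : (s * P * s).PosSemidef := by
    have h := hPpsd.mul_mul_conjTranspose_same s
    rwa [Matrix.conjTranspose_eq_transpose_of_trivial, hs] at h
  have hsPs : s * P * s = P := by
    apply (open scoped MatrixOrder in (CFC.sq_eq_sq_iff _ _ (Matrix.nonneg_iff_posSemidef.2 hsPs_psd)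
      (Matrix.nonneg_iff_posSemidef.2 hPpsd)).1)
    rw [pow_two, pow_two]
    calc (s * P * s) * (s * P * s) = s * P * (s * s) * P * s := by noncomm_ring
      _ = s * (P * P) * s := by rw [hss]; noncomm_ring
      _ = P * P := hsP2s
  have hPs : P * s = s * P := by
    calc P * s = (s * s) * P * s := by rw [hss, Matrix.one_mul]
      _ = s * (s * P * s) := by noncomm_ring
      _ = s * P := by rw [hsPs]
  have hWsW : W * s * W = s' := by
    rw [hWdef]
    calc M * P * s * (M * P) = M * (P * s) * (M * P) := by noncomm_ring
      _ = M * (s * P) * (M * P) := by rw [hPs]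
      _ = (M * s) * (P * M * P) := by noncomm_ring
      _ = (s' * M) * (P * M * P) := by rw [hMs]
      _ = s' * (M * P * (M * P)) := by noncomm_ring
      _ = s' * 1 := by rw [← hWdef, hWsq]
      _ = s' := Matrix.mul_one _
  -- Lipschitz bound
  have hPinv_ge : ∀ x, 3/4 * (x ⬝ᵥ x) ≤ x ⬝ᵥ (Pinv *ᵥ x) := by
    intro x
    rw [hPinvdef]
    exact her_quad_ge hM (fun i => hμlow i) x
  have hone_ge : ∀ x : Fin N → ℝ, 3/4 * (x ⬝ᵥ x) ≤ x ⬝ᵥ ((1 : Matrix (Fin N) (Fin N) ℝ) *ᵥ x) := by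
    intro x
    rw [Matrix.one_mulVec]
    have hxx : 0 ≤ x ⬝ᵥ x := by rw [← en_sq]; positivity
    linarith
  have hPinvsq : Pinv * Pinv = M * M := by
    rw [hPinvdef, her_mul, hM2her]
    rw [show (fun i => |hM.eigenvalues i| * |hM.eigenvalues i|)
        = fun i => hM.eigenvalues i * hM.eigenvalues i from
      funext fun i => abs_mul_abs_self _]
  have hsyl : Pinv * (Pinv - 1) + (Pinv - 1) * 1 = M * M - 1 := by
    rw [show Pinv * (Pinv - 1) + (Pinv - 1) * 1 = Pinv * Pinv - 1 by noncomm_ring, hPinvsq]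
  have hPinv1 : ‖Pinv - 1‖ ≤ ‖M * M - 1‖ / (2 * (3/4)) :=
    sylvester Pinv 1 (Pinv - 1) (M * M - 1) (by norm_num) hPinv_ge hone_ge hsyl
  have hM21 : ‖M * M - 1‖ ≤ (9/4) * ‖M - s‖ := by
    have hid : M * M - 1 = M * (M - s) + (M - s) * s := by
      rw [Matrix.mul_sub, Matrix.sub_mul, hss]
      abel
    rw [hid]
    calc ‖M * (M - s) + (M - s) * s‖ ≤ ‖M * (M - s)‖ + ‖(M - s) * s‖ := norm_add_le _ _
      _ ≤ ‖M‖ * ‖M - s‖ + ‖M - s‖ * ‖s‖ :=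
          add_le_add (Matrix.l2_opNorm_mul _ _) (Matrix.l2_opNorm_mul _ _)
      _ ≤ (9/4) * ‖M - s‖ := by nlinarith [norm_nonneg (M - s), norm_nonneg M, norm_nonneg s]
  have hPn : ‖P‖ ≤ 4/3 := by
    rw [hPdef]
    refine her_norm_le hM (by norm_num) fun i => ?_
    rw [abs_of_nonneg (by positivity)]
    rw [show (4:ℝ)/3 = ((3:ℝ)/4)⁻¹ by norm_num]
    exact inv_anti₀ (by norm_num) (hμlow i)
  have hP1 : ‖P - 1‖ ≤ (4/3) * ‖Pinv - 1‖ := by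
    have hid : P - 1 = P * (1 - Pinv) := by
      rw [Matrix.mul_sub, Matrix.mul_one, hPPinv]
    rw [hid]
    calc ‖P * (1 - Pinv)‖ ≤ ‖P‖ * ‖1 - Pinv‖ := Matrix.l2_opNorm_mul _ _
      _ ≤ (4/3) * ‖Pinv - 1‖ := by
          rw [norm_sub_rev]
          exact mul_le_mul hPn le_rfl (norm_nonneg _) (by norm_num)
  have hfinal : ‖W - s‖ ≤ 3 * ‖s' - s‖ := by
    have hid : W - s = (M - s) * P + s * (P - 1) := by
      rw [hWdef, Matrix.sub_mul, Matrix.mul_sub, Matrix.mul_one]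
      abel
    have h1 : ‖W - s‖ ≤ ‖M - s‖ * ‖P‖ + ‖s‖ * ‖P - 1‖ := by
      rw [hid]
      calc ‖(M - s) * P + s * (P - 1)‖ ≤ ‖(M - s) * P‖ + ‖s * (P - 1)‖ := norm_add_le _ _
        _ ≤ ‖M - s‖ * ‖P‖ + ‖s‖ * ‖P - 1‖ :=
            add_le_add (Matrix.l2_opNorm_mul _ _) (Matrix.l2_opNorm_mul _ _)
    have hd0 : 0 ≤ ‖s' - s‖ := norm_nonneg _
    have hP1n : ‖P - 1‖ ≤ ‖s' - s‖ := by
      have h2 : ‖Pinv - 1‖ ≤ (2/3) * ((9/4) * ‖M - s‖) := by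
        rw [show (2:ℝ)/3 * ((9:ℝ)/4 * ‖M - s‖) = ((9/4) * ‖M - s‖)/(2 * (3/4)) by ring]
        exact hPinv1.trans (by gcongr)
      have h3 : ‖Pinv - 1‖ ≤ (3/4) * ‖s' - s‖ := by rw [hMsubn] at h2; linarith
      calc ‖P - 1‖ ≤ (4/3) * ‖Pinv - 1‖ := hP1
        _ ≤ ‖s' - s‖ := by linarith
    have hMP4 : ‖M - s‖ * ‖P‖ ≤ (‖s' - s‖/2) * (4/3) := by
      rw [hMsubn]
      exact mul_le_mul le_rfl hPn (norm_nonneg _) (by positivity)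
    have hs1 : ‖s‖ * ‖P - 1‖ ≤ 1 * ‖s' - s‖ :=
      mul_le_mul hns hP1n (norm_nonneg _) zero_le_one
    nlinarith
  exact ⟨W, hWt, by rw [hWt]; exact hWsq, by rw [hWt]; exact hWsq, hWsW, hfinal⟩

end LorentzAux

namespace LorentzAux

lemma matOpNorm_eq {m : ℕ} (A : Matrix (Fin m) (Fin m) ℝ) : matOpNorm A = ‖A‖ := rfl

set_option maxHeartbeats 1000000 in
lemma member_pack (n : ℕ) {ε : ℝ} (hε : 0 < ε) (hε1 : ε ≤ 1)
    (G : Matrix (Fin (n+1)) (Fin (n+1)) ℝ) (hG : G ∈ lorentzSet n ε) :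
    ∃ Rh sg Rinv O : Matrix (Fin (n+1)) (Fin (n+1)) ℝ,
      Rhᵀ = Rh ∧
      sgᵀ = sg ∧ sg * sg = 1 ∧ ‖sg‖ ≤ 1 ∧
      Rh * sg = sg * Rh ∧
      sg * (Rh * Rh) = G ∧
      Oᵀ * O = 1 ∧ O * Oᵀ = 1 ∧ Oᵀ * minkowskiEta n * O = sg ∧
      ‖Rh‖ = Real.sqrt ‖G‖ ∧
      (∀ x, Real.sqrt (ε^(n+1)) * (x ⬝ᵥ x) ≤ x ⬝ᵥ (Rh *ᵥ x)) ∧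
      (∀ x, (ε^(n+1)) * (x ⬝ᵥ x) ≤ x ⬝ᵥ ((Rh * Rh) *ᵥ x)) ∧
      (Rh * Rh) * (Rh * Rh) = G * G ∧
      (Rh * Rh) * Rinv = 1 ∧ Rinv * (Rh * Rh) = 1 ∧ ‖Rinv‖ ≤ (ε^(n+1))⁻¹ ∧
      sg = G * Rinv := by
  obtain ⟨hH, ⟨j, hjneg, hjpos⟩, hdet, hnorm⟩ := hG
  rw [matOpNorm_eq] at hnorm
  have ha : (0:ℝ) < ε^(n+1) := pow_pos hε _
  have habs : ∀ i, |hH.eigenvalues i| ≤ ‖G‖ := fun i => by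
    have h := abs_eig_le_norm hH hH.eigenvalues i
    rwa [her_self hH] at h
  have hdetprod : |G.det| = ∏ i, |hH.eigenvalues i| := by
    rw [hH.det_eq_prod_eigenvalues, ← Finset.abs_prod]
    norm_num
  have hlow : ∀ i, ε^(n+1) ≤ |hH.eigenvalues i| := by
    intro i
    have hsplit : ∏ l, |hH.eigenvalues l|
        = |hH.eigenvalues i| * ∏ l ∈ Finset.univ.erase i, |hH.eigenvalues l| :=
      (Finset.mul_prod_erase Finset.univ _ (Finset.mem_univ i)).symm
    have hcard : (Finset.univ.erase i).card = n := by
      rw [Finset.card_erase_of_mem (Finset.mem_univ i), Finset.card_univ, Fintype.card_fin]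
      omega
    have hbound : ∏ l ∈ Finset.univ.erase i, |hH.eigenvalues l| ≤ ε⁻¹ ^ n := by
      calc ∏ l ∈ Finset.univ.erase i, |hH.eigenvalues l|
          ≤ ∏ _l ∈ Finset.univ.erase i, ε⁻¹ :=
            Finset.prod_le_prod (fun l _ => abs_nonneg _)
              (fun l _ => le_of_lt (lt_of_le_of_lt (habs l) hnorm))
        _ = ε⁻¹ ^ n := by rw [Finset.prod_const, hcard]
    have hp : ε < |hH.eigenvalues i| * ε⁻¹ ^ n := by
      calc ε < |G.det| := hdet
        _ = |hH.eigenvalues i| * ∏ l ∈ Finset.univ.erase i, |hH.eigenvalues l| := by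
            rw [hdetprod, hsplit]
        _ ≤ |hH.eigenvalues i| * ε⁻¹ ^ n :=
            mul_le_mul_of_nonneg_left hbound (abs_nonneg _)
    have hx : ε⁻¹ ^ n * ε ^ n = 1 := by
      rw [← mul_pow, inv_mul_cancel₀ (ne_of_gt hε), one_pow]
    have h2 := mul_lt_mul_of_pos_right hp (pow_pos hε n)
    rw [mul_assoc, hx, mul_one] at h2
    calc ε^(n+1) = ε * ε^n := by rw [pow_succ]; ring
      _ ≤ |hH.eigenvalues i| := le_of_lt h2
  have hne : ∀ i, hH.eigenvalues i ≠ 0 := fun i h => by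
    have := hlow i; rw [h] at this; simp at this; linarith
  obtain ⟨Rh, hRhdef⟩ : ∃ R, R = her hH (fun i => Real.sqrt |hH.eigenvalues i|) := ⟨_, rfl⟩
  obtain ⟨sg, hsgdef⟩ :
    ∃ S, S = her hH (fun i => if hH.eigenvalues i < 0 then (-1:ℝ) else 1) := ⟨_, rfl⟩
  obtain ⟨Rinv, hRinvdef⟩ : ∃ R, R = her hH (fun i => |hH.eigenvalues i|⁻¹) := ⟨_, rfl⟩
  obtain ⟨O, hOdef⟩ :
    ∃ O, O = permMat (Equiv.swap (0 : Fin (n+1)) j) *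
      ((hH.eigenvectorUnitary : Matrix (Fin (n+1)) (Fin (n+1)) ℝ))ᵀ := ⟨_, rfl⟩
  have hRhRh : Rh * Rh = her hH (fun i => |hH.eigenvalues i|) := by
    rw [hRhdef, her_mul]
    rw [show (fun i => Real.sqrt |hH.eigenvalues i| * Real.sqrt |hH.eigenvalues i|)
        = fun i => |hH.eigenvalues i| from funext fun i => Real.mul_self_sqrt (abs_nonneg _)]
  refine ⟨Rh, sg, Rinv, O, ?_, ?_, ?_, ?_, ?_, ?_, ?_, ?_, ?_, ?_, ?_, ?_, ?_, ?_, ?_, ?_, ?_⟩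
  · rw [hRhdef]; exact her_transpose hH _
  · rw [hsgdef]; exact her_transpose hH _
  · rw [hsgdef, her_mul]
    rw [show (fun i => (if hH.eigenvalues i < 0 then (-1:ℝ) else 1) *
        (if hH.eigenvalues i < 0 then (-1:ℝ) else 1)) = fun _ => (1:ℝ) from
      funext fun i => by by_cases h : hH.eigenvalues i < 0 <;> simp [h]]
    exact her_one hH
  · rw [hsgdef]
    exact her_norm_le hH zero_le_one fun i => by
      by_cases h : hH.eigenvalues i < 0 <;> simp [h]
  · rw [hRhdef, hsgdef, her_mul, her_mul]
    rw [show (fun i => Real.sqrt |hH.eigenvalues i| *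
        (if hH.eigenvalues i < 0 then (-1:ℝ) else 1))
        = (fun i => (if hH.eigenvalues i < 0 then (-1:ℝ) else 1) *
          Real.sqrt |hH.eigenvalues i|) from funext fun i => mul_comm _ _]
  · rw [hRhRh, hsgdef, her_mul]
    rw [show (fun i => (if hH.eigenvalues i < 0 then (-1:ℝ) else 1) * |hH.eigenvalues i|)
        = hH.eigenvalues from funext fun i => by
      by_cases h : hH.eigenvalues i < 0
      · rw [if_pos h, abs_of_neg h]; ring
      · rw [if_neg h, abs_of_nonneg (le_of_not_gt h)]; ring]
    exact her_self hH
  · rw [hOdef, Matrix.transpose_mul, Matrix.transpose_transpose]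
    calc (hH.eigenvectorUnitary : Matrix (Fin (n+1)) (Fin (n+1)) ℝ) *
          (permMat (Equiv.swap (0 : Fin (n+1)) j))ᵀ *
          (permMat (Equiv.swap (0 : Fin (n+1)) j) *
          ((hH.eigenvectorUnitary : Matrix (Fin (n+1)) (Fin (n+1)) ℝ))ᵀ)
        = (hH.eigenvectorUnitary : Matrix (Fin (n+1)) (Fin (n+1)) ℝ) *
          ((permMat (Equiv.swap (0 : Fin (n+1)) j))ᵀ *
          permMat (Equiv.swap (0 : Fin (n+1)) j)) *
          ((hH.eigenvectorUnitary : Matrix (Fin (n+1)) (Fin (n+1)) ℝ))ᵀ := by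
          noncomm_ring
      _ = 1 := by rw [permMat_t_mul, Matrix.mul_one, unitary_mul_t hH]
  · rw [hOdef, Matrix.transpose_mul, Matrix.transpose_transpose]
    calc permMat (Equiv.swap (0 : Fin (n+1)) j) *
          ((hH.eigenvectorUnitary : Matrix (Fin (n+1)) (Fin (n+1)) ℝ))ᵀ *
          ((hH.eigenvectorUnitary : Matrix (Fin (n+1)) (Fin (n+1)) ℝ) *
          (permMat (Equiv.swap (0 : Fin (n+1)) j))ᵀ)
        = permMat (Equiv.swap (0 : Fin (n+1)) j) *
          (((hH.eigenvectorUnitary : Matrix (Fin (n+1)) (Fin (n+1)) ℝ))ᵀ *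
          (hH.eigenvectorUnitary : Matrix (Fin (n+1)) (Fin (n+1)) ℝ)) *
          (permMat (Equiv.swap (0 : Fin (n+1)) j))ᵀ := by noncomm_ring
      _ = 1 := by rw [unitary_t_mul hH, Matrix.mul_one, permMat_mul_t]
  · -- Oᵀ * η * O = sg
    have hswap0 : ∀ i : Fin (n+1), Equiv.swap (0 : Fin (n+1)) j i = 0 ↔ i = j := by
      intro i
      constructor
      · intro h
        have h2 : Equiv.swap (0 : Fin (n+1)) j j = 0 := Equiv.swap_apply_right 0 j
        exact (Equiv.swap (0 : Fin (n+1)) j).injective (h.trans h2.symm)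
      · intro h; rw [h]; exact Equiv.swap_apply_right 0 j
    have hdiag : (permMat (Equiv.swap (0 : Fin (n+1)) j))ᵀ * minkowskiEta n *
        permMat (Equiv.swap (0 : Fin (n+1)) j) =
        Matrix.diagonal (fun i => if hH.eigenvalues i < 0 then (-1:ℝ) else 1) := by
      rw [minkowskiEta, permMat_conj_diag]
      rw [show (fun i => if (Equiv.swap (0 : Fin (n+1)) j).symm i = 0 then (-1:ℝ) else 1)
          = (fun i => if hH.eigenvalues i < 0 then (-1:ℝ) else 1) from funext fun i => by
        rw [Equiv.symm_swap]
        by_cases h : i = j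
        · rw [if_pos ((hswap0 i).mpr h), if_pos (h ▸ hjneg)]
        · have h1 : ¬ ((Equiv.swap (0 : Fin (n+1)) j) i = 0) := fun hc => h ((hswap0 i).mp hc)
          rw [if_neg h1, if_neg (not_lt.mpr (le_of_lt (hjpos i h)))]]
    rw [hOdef, Matrix.transpose_mul, Matrix.transpose_transpose, hsgdef, her,
      star_eq_transpose]
    calc (hH.eigenvectorUnitary : Matrix (Fin (n+1)) (Fin (n+1)) ℝ) *
          (permMat (Equiv.swap (0 : Fin (n+1)) j))ᵀ * minkowskiEta n *
          (permMat (Equiv.swap (0 : Fin (n+1)) j) *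
          ((hH.eigenvectorUnitary : Matrix (Fin (n+1)) (Fin (n+1)) ℝ))ᵀ)
        = (hH.eigenvectorUnitary : Matrix (Fin (n+1)) (Fin (n+1)) ℝ) *
          ((permMat (Equiv.swap (0 : Fin (n+1)) j))ᵀ * minkowskiEta n *
          permMat (Equiv.swap (0 : Fin (n+1)) j)) *
          ((hH.eigenvectorUnitary : Matrix (Fin (n+1)) (Fin (n+1)) ℝ))ᵀ := by noncomm_ring
      _ = _ := by rw [hdiag]
  · -- norm of Rh
    obtain ⟨i₁, -, hi₁⟩ := Finset.exists_max_image (Finset.univ : Finset (Fin (n+1)))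
      (fun i => |hH.eigenvalues i|) ⟨0, Finset.mem_univ _⟩
    have hGn : ‖G‖ = |hH.eigenvalues i₁| := by
      refine le_antisymm ?_ (habs i₁)
      have h := her_norm_le hH (abs_nonneg _) (fun i => hi₁ i (Finset.mem_univ i))
      rwa [her_self hH] at h
    have hRn : ‖Rh‖ = Real.sqrt |hH.eigenvalues i₁| := by
      refine le_antisymm ?_ ?_
      · rw [hRhdef]
        exact her_norm_le hH (Real.sqrt_nonneg _) fun i => by
          rw [abs_of_nonneg (Real.sqrt_nonneg _)]
          exact Real.sqrt_le_sqrt (hi₁ i (Finset.mem_univ i))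
      · have h := abs_eig_le_norm hH (fun i => Real.sqrt |hH.eigenvalues i|) i₁
        rw [← hRhdef, abs_of_nonneg (Real.sqrt_nonneg _)] at h
        exact h
    rw [hRn, hGn]
  · intro x
    rw [hRhdef]
    exact her_quad_ge hH (fun i => Real.sqrt_le_sqrt (hlow i)) x
  · intro x
    rw [hRhRh]
    exact her_quad_ge hH (fun i => hlow i) x
  · rw [hRhRh, her_mul]
    rw [show (fun i => |hH.eigenvalues i| * |hH.eigenvalues i|)
        = fun i => hH.eigenvalues i * hH.eigenvalues i from
      funext fun i => abs_mul_abs_self _]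
    rw [show her hH (fun i => hH.eigenvalues i * hH.eigenvalues i)
        = her hH hH.eigenvalues * her hH hH.eigenvalues from (her_mul hH _ _).symm,
      her_self hH]
  · rw [hRhRh, hRinvdef, her_mul]
    rw [show (fun i => |hH.eigenvalues i| * |hH.eigenvalues i|⁻¹) = fun _ => (1:ℝ) from
      funext fun i => mul_inv_cancel₀ (abs_ne_zero.mpr (hne i))]
    exact her_one hH
  · rw [hRhRh, hRinvdef, her_mul]
    rw [show (fun i => |hH.eigenvalues i|⁻¹ * |hH.eigenvalues i|) = fun _ => (1:ℝ) from
      funext fun i => inv_mul_cancel₀ (abs_ne_zero.mpr (hne i))]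
    exact her_one hH
  · rw [hRinvdef]
    refine her_norm_le hH (by positivity) fun i => ?_
    rw [abs_of_nonneg (by positivity)]
    exact inv_anti₀ ha (hlow i)
  · -- sg = G * Rinv
    symm
    calc G * Rinv = her hH hH.eigenvalues * Rinv := by rw [her_self hH]
      _ = her hH (fun i => hH.eigenvalues i * |hH.eigenvalues i|⁻¹) := by
          rw [hRinvdef, her_mul]
      _ = sg := by
          rw [show (fun i => hH.eigenvalues i * |hH.eigenvalues i|⁻¹)
              = (fun i => if hH.eigenvalues i < 0 then (-1:ℝ) else 1) from funext fun i => by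
            by_cases h : hH.eigenvalues i < 0
            · rw [if_pos h, abs_of_neg h, ← div_eq_mul_inv, div_neg, div_self (hne i)]
            · rw [if_neg h, abs_of_nonneg (le_of_not_gt h)]
              exact mul_inv_cancel₀ (hne i), ← hsgdef]

end LorentzAux

namespace LorentzAux

lemma orth_comp {N : ℕ} {A B : Matrix (Fin N) (Fin N) ℝ}
    (hA : Aᵀ * A = 1) (hA2 : A * Aᵀ = 1) (hB : Bᵀ * B = 1) (hB2 : B * Bᵀ = 1) :
    (A * B)ᵀ * (A * B) = 1 ∧ (A * B) * (A * B)ᵀ = 1 := by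
  constructor
  · rw [Matrix.transpose_mul]
    calc Bᵀ * Aᵀ * (A * B) = Bᵀ * (Aᵀ * A) * B := by noncomm_ring
      _ = 1 := by rw [hA, Matrix.mul_one, hB]
  · rw [Matrix.transpose_mul]
    calc A * B * (Bᵀ * Aᵀ) = A * (B * Bᵀ) * Aᵀ := by noncomm_ring
      _ = 1 := by rw [hB2, Matrix.mul_one, hA2]

end LorentzAux

open LorentzAux in
set_option maxHeartbeats 2000000 in
theorem lorentz_decomposition_lipschitz (n : ℕ) (ε : ℝ) (hε : 0 < ε) (hε1 : ε ≤ 1) :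
    ∃ C : ℝ, ∀ G ∈ lorentzSet n ε,
      ∃ F : Matrix (Fin (n + 1)) (Fin (n + 1)) ℝ → Matrix (Fin (n + 1)) (Fin (n + 1)) ℝ,
        ∀ G' ∈ lorentzSet n ε,
          G' = (F G')ᵀ * minkowskiEta n * F G' ∧
          matOpNorm (F G') = Real.sqrt (matOpNorm G') ∧
          matOpNorm (F G' - F G) ≤ C * matOpNorm (G' - G) := by
  have hεinv : (0:ℝ) < ε⁻¹ := inv_pos.mpr hε
  set a := ε ^ (n+1) with ha_def
  have ha : 0 < a := pow_pos hε _
  have hsa : 0 < Real.sqrt a := Real.sqrt_pos.mpr ha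
  set c2 := (2 * ε⁻¹) / (2 * a) with hc2def
  have hc2 : 0 < c2 := by positivity
  set c3 := c2 / (2 * Real.sqrt a) with hc3def
  have hc3 : 0 < c3 := by positivity
  set c4 := a⁻¹ * c2 * a⁻¹ with hc4def
  have hc4 : 0 < c4 := by positivity
  set c5 := a⁻¹ + ε⁻¹ * c4 with hc5def
  have hc5 : 0 < c5 := by positivity
  set δ := 1 / (2 * c5) with hδdef
  have hδ : 0 < δ := by positivity
  have hse : 0 < Real.sqrt ε⁻¹ := Real.sqrt_pos.mpr hεinv
  set C := 3 * c5 * Real.sqrt ε⁻¹ + c3 + 2 * Real.sqrt ε⁻¹ / δ with hCdef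
  refine ⟨C, fun G hGmem => ?_⟩
  obtain ⟨RhG, sG, RinvG, OG, pG1, pG2, pG3, pG4, pG5, pG6, pG7, pG8, pG9, pG10,
    pG11, pG12, pG13, pG14, pG15, pG16, pG17⟩ := member_pack n hε hε1 G hGmem
  have hGnorm : ‖G‖ < ε⁻¹ := by
    obtain ⟨_, _, _, h⟩ := hGmem
    rwa [matOpNorm_eq] at h
  -- base point
  set B := OG * sG * RhG with hBdef
  have hsGorth : sGᵀ * sG = 1 := by rw [pG2, pG3]
  have hsGorth2 : sG * sGᵀ = 1 := by rw [pG2, pG3]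
  have hOGsG := orth_comp pG7 pG8 hsGorth hsGorth2
  have hBnorm : ‖B‖ = Real.sqrt ‖G‖ := by
    rw [hBdef, Matrix.mul_assoc, ← pG10]
    exact norm_mul_orth_left pG7 pG8 _ |>.trans (norm_mul_orth_left hsGorth hsGorth2 _)
  have key : ∀ G' : Matrix (Fin (n+1)) (Fin (n+1)) ℝ,
      ∃ F' : Matrix (Fin (n+1)) (Fin (n+1)) ℝ,
        (G' ∈ lorentzSet n ε →
          (G' = F'ᵀ * minkowskiEta n * F' ∧ ‖F'‖ = Real.sqrt ‖G'‖ ∧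
            ‖F' - B‖ ≤ C * ‖G' - G‖)) ∧ (G' = G → F' = B) := by
    intro G'
    by_cases hmem : G' ∈ lorentzSet n ε
    swap
    · exact ⟨B, fun h => absurd h hmem, fun _ => rfl⟩
    obtain ⟨Rh', s', Rinv', O', p1, p2, p3, p4, p5, p6, p7, p8, p9, p10,
      p11, p12, p13, p14, p15, p16, p17⟩ := member_pack n hε hε1 G' hmem
    have hG'norm : ‖G'‖ < ε⁻¹ := by
      obtain ⟨_, _, _, h⟩ := hmem
      rwa [matOpNorm_eq] at h
    have hs'orth : s'ᵀ * s' = 1 := by rw [p2, p3]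
    have hs'orth2 : s' * s'ᵀ = 1 := by rw [p2, p3]
    by_cases hnear : ‖G' - G‖ < δ
    swap
    · -- far branch
      refine ⟨O' * Rh', fun _ => ⟨?_, ?_, ?_⟩, fun hEq => ?_⟩
      · rw [Matrix.transpose_mul, p1]
        calc G' = Rh' * (O'ᵀ * minkowskiEta n * O') * Rh' := by
              rw [p9]
              calc G' = s' * (Rh' * Rh') := p6.symm
                _ = (s' * Rh') * Rh' := by noncomm_ring
                _ = (Rh' * s') * Rh' := by rw [← p5]
                _ = Rh' * s' * Rh' := by noncomm_ring
          _ = Rh' * O'ᵀ * minkowskiEta n * (O' * Rh') := by noncomm_ring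
      · rw [norm_mul_orth_left p7 p8, p10]
      · have hd : δ ≤ ‖G' - G‖ := le_of_not_gt hnear
        have h1 : ‖O' * Rh' - B‖ ≤ 2 * Real.sqrt ε⁻¹ := by
          calc ‖O' * Rh' - B‖ ≤ ‖O' * Rh'‖ + ‖B‖ := norm_sub_le _ _
            _ = Real.sqrt ‖G'‖ + Real.sqrt ‖G‖ := by
                rw [norm_mul_orth_left p7 p8, p10, hBnorm]
            _ ≤ Real.sqrt ε⁻¹ + Real.sqrt ε⁻¹ :=
                add_le_add (Real.sqrt_le_sqrt (le_of_lt hG'norm))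
                  (Real.sqrt_le_sqrt (le_of_lt hGnorm))
            _ = 2 * Real.sqrt ε⁻¹ := by ring
        have h2 : 2 * Real.sqrt ε⁻¹ ≤ (2 * Real.sqrt ε⁻¹ / δ) * ‖G' - G‖ := by
          rw [div_mul_eq_mul_div, le_div_iff₀ hδ]
          have := mul_le_mul_of_nonneg_left hd (by positivity : (0:ℝ) ≤ 2 * Real.sqrt ε⁻¹)
          linarith
        have h3 : (2 * Real.sqrt ε⁻¹ / δ) * ‖G' - G‖ ≤ C * ‖G' - G‖ := by
          apply mul_le_mul_of_nonneg_right _ (norm_nonneg _)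
          rw [hCdef]
          nlinarith [mul_pos (mul_pos (by norm_num : (0:ℝ)<3) hc5) hse, hc3]
        exact h1.trans (h2.trans h3)
      · exfalso
        rw [hEq, sub_self, norm_zero] at hnear
        exact hnear hδ
    · -- near branch
      -- chain of estimates
      have e2 : ‖G' * G' - G * G‖ ≤ 2 * ε⁻¹ * ‖G' - G‖ := by
        have hid : G' * G' - G * G = G' * (G' - G) + (G' - G) * G := by noncomm_ring
        rw [hid]
        calc ‖G' * (G' - G) + (G' - G) * G‖ ≤ ‖G' * (G' - G)‖ + ‖(G' - G) * G‖ :=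
              norm_add_le _ _
          _ ≤ ‖G'‖ * ‖G' - G‖ + ‖G' - G‖ * ‖G‖ :=
              add_le_add (Matrix.l2_opNorm_mul _ _) (Matrix.l2_opNorm_mul _ _)
          _ ≤ 2 * ε⁻¹ * ‖G' - G‖ := by
              nlinarith [norm_nonneg (G' - G), norm_nonneg G', norm_nonneg G]
      have e3 : ‖Rh' * Rh' - RhG * RhG‖ ≤ c2 * ‖G' - G‖ := by
        have hid : (Rh' * Rh') * ((Rh' * Rh') - (RhG * RhG)) +
            ((Rh' * Rh') - (RhG * RhG)) * (RhG * RhG) = G' * G' - G * G := by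
          rw [show (Rh' * Rh') * ((Rh' * Rh') - (RhG * RhG)) +
              ((Rh' * Rh') - (RhG * RhG)) * (RhG * RhG)
              = (Rh' * Rh') * (Rh' * Rh') - (RhG * RhG) * (RhG * RhG) by noncomm_ring,
            p13, pG13]
        have h := sylvester (Rh' * Rh') (RhG * RhG) ((Rh' * Rh') - (RhG * RhG))
          (G' * G' - G * G) ha p12 pG12 hid
        calc ‖Rh' * Rh' - RhG * RhG‖ ≤ ‖G' * G' - G * G‖ / (2 * a) := h
          _ ≤ (2 * ε⁻¹ * ‖G' - G‖) / (2 * a) := by gcongr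
          _ = c2 * ‖G' - G‖ := by rw [hc2def]; ring
      have e4 : ‖Rh' - RhG‖ ≤ c3 * ‖G' - G‖ := by
        have hid : Rh' * (Rh' - RhG) + (Rh' - RhG) * RhG = Rh' * Rh' - RhG * RhG := by
          noncomm_ring
        have h := sylvester Rh' RhG (Rh' - RhG) (Rh' * Rh' - RhG * RhG) hsa p11 pG11 hid
        calc ‖Rh' - RhG‖ ≤ ‖Rh' * Rh' - RhG * RhG‖ / (2 * Real.sqrt a) := h
          _ ≤ (c2 * ‖G' - G‖) / (2 * Real.sqrt a) := by gcongr
          _ = c3 * ‖G' - G‖ := by rw [hc3def]; ring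
      have e5 : ‖Rinv' - RinvG‖ ≤ c4 * ‖G' - G‖ := by
        have hid : Rinv' - RinvG = Rinv' * ((RhG * RhG) - (Rh' * Rh')) * RinvG := by
          rw [Matrix.mul_sub, Matrix.sub_mul, Matrix.mul_assoc, pG14, Matrix.mul_one]
          rw [show Rinv' * (Rh' * Rh') * RinvG = (Rinv' * (Rh' * Rh')) * RinvG by
            noncomm_ring, p15, Matrix.one_mul]
        rw [hid]
        calc ‖Rinv' * ((RhG * RhG) - (Rh' * Rh')) * RinvG‖
            ≤ ‖Rinv' * ((RhG * RhG) - (Rh' * Rh'))‖ * ‖RinvG‖ := Matrix.l2_opNorm_mul _ _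
          _ ≤ ‖Rinv'‖ * ‖(RhG * RhG) - (Rh' * Rh')‖ * ‖RinvG‖ :=
              mul_le_mul_of_nonneg_right (Matrix.l2_opNorm_mul _ _) (norm_nonneg _)
          _ ≤ a⁻¹ * (c2 * ‖G' - G‖) * a⁻¹ := by
              rw [norm_sub_rev] at e3
              have h1 : (0:ℝ) ≤ a⁻¹ := by positivity
              have hn2 := norm_nonneg (RhG * RhG - Rh' * Rh')
              have hn3 := norm_nonneg RinvG
              refine mul_le_mul (mul_le_mul p16 e3 hn2 h1) pG16 hn3 ?_
              exact mul_nonneg h1 (mul_nonneg (le_of_lt hc2) (norm_nonneg _))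
          _ = c4 * ‖G' - G‖ := by rw [hc4def]; ring
      have e6 : ‖s' - sG‖ ≤ c5 * ‖G' - G‖ := by
        have hid : s' - sG = (G' - G) * Rinv' + G * (Rinv' - RinvG) := by
          rw [p17, pG17, Matrix.sub_mul, Matrix.mul_sub]
          abel
        rw [hid]
        calc ‖(G' - G) * Rinv' + G * (Rinv' - RinvG)‖
            ≤ ‖(G' - G) * Rinv'‖ + ‖G * (Rinv' - RinvG)‖ := norm_add_le _ _
          _ ≤ ‖G' - G‖ * ‖Rinv'‖ + ‖G‖ * ‖Rinv' - RinvG‖ :=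
              add_le_add (Matrix.l2_opNorm_mul _ _) (Matrix.l2_opNorm_mul _ _)
          _ ≤ ‖G' - G‖ * a⁻¹ + ε⁻¹ * (c4 * ‖G' - G‖) := by
              refine add_le_add (mul_le_mul_of_nonneg_left p16 (norm_nonneg _))
                (mul_le_mul (le_of_lt hGnorm) e5 (norm_nonneg _) (le_of_lt hεinv))
          _ = c5 * ‖G' - G‖ := by rw [hc5def]; ring
      have hss : ‖s' - sG‖ ≤ 1/2 := by
        have h1 : c5 * ‖G' - G‖ ≤ c5 * δ := mul_le_mul_of_nonneg_left
          (le_of_lt hnear) (le_of_lt hc5)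
        have h2 : c5 * δ = 1/2 := by rw [hδdef]; field_simp
        exact e6.trans (h1.trans_eq h2)
      obtain ⟨W, hW1, hW2, hW3, hW4, hW5⟩ := W_pack sG s' pG2 p2 pG3 p3 pG4 p4 hss
      refine ⟨OG * W * Rh', fun _ => ⟨?_, ?_, ?_⟩, fun hEq => ?_⟩
      · -- decomposition
        rw [show (OG * W * Rh')ᵀ = Rh'ᵀ * Wᵀ * OGᵀ by
          rw [Matrix.transpose_mul, Matrix.transpose_mul]; noncomm_ring,
          p1, hW1]
        calc G' = Rh' * s' * Rh' := by
              calc G' = s' * (Rh' * Rh') := p6.symm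
                _ = (s' * Rh') * Rh' := by noncomm_ring
                _ = (Rh' * s') * Rh' := by rw [← p5]
                _ = Rh' * s' * Rh' := by noncomm_ring
          _ = Rh' * (W * sG * W) * Rh' := by rw [hW4]
          _ = Rh' * (W * (OGᵀ * minkowskiEta n * OG) * W) * Rh' := by rw [pG9]
          _ = Rh' * W * OGᵀ * minkowskiEta n * (OG * W * Rh') := by noncomm_ring
      · -- norm
        have horth := orth_comp pG7 pG8 hW2 hW3
        rw [norm_mul_orth_left horth.1 horth.2, p10]
      · -- Lipschitz
        have hid : OG * W * Rh' - B = OG * (W * Rh' - sG * RhG) := by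
          rw [hBdef, Matrix.mul_sub]
          noncomm_ring
        rw [hid, norm_mul_orth_left pG7 pG8]
        have h1 : W * Rh' - sG * RhG = (W - sG) * Rh' + sG * (Rh' - RhG) := by
          noncomm_ring
        rw [h1]
        have hRh'n : ‖Rh'‖ ≤ Real.sqrt ε⁻¹ := by
          rw [p10]; exact Real.sqrt_le_sqrt (le_of_lt hG'norm)
        have h2 : ‖(W - sG) * Rh' + sG * (Rh' - RhG)‖
            ≤ ‖W - sG‖ * ‖Rh'‖ + ‖sG‖ * ‖Rh' - RhG‖ :=
          (norm_add_le _ _).trans (add_le_add (Matrix.l2_opNorm_mul _ _)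
            (Matrix.l2_opNorm_mul _ _))
        have h3 : ‖W - sG‖ ≤ 3 * (c5 * ‖G' - G‖) := hW5.trans (by
          have := mul_le_mul_of_nonneg_left e6 (by norm_num : (0:ℝ) ≤ 3)
          linarith)
        have h4 : ‖W - sG‖ * ‖Rh'‖ ≤ 3 * c5 * Real.sqrt ε⁻¹ * ‖G' - G‖ := by
          have hn := norm_nonneg (W - sG)
          have hn2 := norm_nonneg Rh'
          have hn3 := norm_nonneg (G' - G)
          nlinarith [mul_le_mul h3 hRh'n hn2 (by positivity : (0:ℝ) ≤ 3 * (c5 * ‖G' - G‖))]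
        have h5 : ‖sG‖ * ‖Rh' - RhG‖ ≤ c3 * ‖G' - G‖ := by
          have hn := norm_nonneg (Rh' - RhG)
          nlinarith [mul_le_mul pG4 e4 hn zero_le_one]
        have h6 : C * ‖G' - G‖ = 3 * c5 * Real.sqrt ε⁻¹ * ‖G' - G‖ + c3 * ‖G' - G‖
            + (2 * Real.sqrt ε⁻¹ / δ) * ‖G' - G‖ := by rw [hCdef]; ring
        have h7 : 0 ≤ (2 * Real.sqrt ε⁻¹ / δ) * ‖G' - G‖ := by positivity
        have h8 : ‖(W - sG) * Rh' + sG * (Rh' - RhG)‖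
            ≤ 3 * c5 * Real.sqrt ε⁻¹ * ‖G' - G‖ + c3 * ‖G' - G‖ :=
          h2.trans (add_le_add h4 h5)
        have h9 : 3 * c5 * Real.sqrt ε⁻¹ * ‖G' - G‖ + c3 * ‖G' - G‖ ≤ C * ‖G' - G‖ := by
          rw [h6]
          exact le_add_of_nonneg_right h7
        exact h8.trans h9
      · -- value at the base point
        have hΔ : ‖G' - G‖ = 0 := by rw [hEq, sub_self, norm_zero]
        have hWeq : W = sG := by
          have h1 : ‖W - sG‖ ≤ 0 := by
            have := hW5.trans (mul_le_mul_of_nonneg_left e6 (by norm_num : (0:ℝ) ≤ 3))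
            rw [hΔ] at this
            simpa using this
          have := le_antisymm h1 (norm_nonneg _)
          rwa [norm_eq_zero, sub_eq_zero] at this
        have hRheq : Rh' = RhG := by
          have h1 : ‖Rh' - RhG‖ ≤ 0 := by
            have := e4; rw [hΔ] at this; simpa using this
          have := le_antisymm h1 (norm_nonneg _)
          rwa [norm_eq_zero, sub_eq_zero] at this
        rw [hWeq, hRheq, hBdef]
  choose F hF using key
  refine ⟨F, fun G' hG'mem => ?_⟩
  obtain ⟨h1, h2, h3⟩ := (hF G').1 hG'mem
  have hFG : F G = B := (hF G).2 rfl
  refine ⟨h1, ?_, ?_⟩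
  · rw [matOpNorm_eq, matOpNorm_eq]; exact h2
  · rw [matOpNorm_eq, matOpNorm_eq, hFG]; exact h3
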